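/- Let (X_1,Y_1),…,(X_n,Y_n) be i.i.d. pairs with continuous marginal CDFs F_X and F_Y. Define ω̂ = (1/n)Σ_j F̂_X(X_j)F̂_Y(Y_j) − 1/4 and ω = E[F_X(X)F_Y(Y)] − 1/4, where F̂_X, F̂_Y are the empirical CDFs. Then for any ε > 0, P(|ω̂ − ω| > 3ε) ≤ 6(n+1)exp(−2nε²). -/

import Mathlib

open MeasureTheory ProbabilityTheory Real
open scoped ENNReal

lemma hoeff_scalar {p t : ℝ} (hp0 : 0 ≤ p) (hp1 : p ≤ 1) (ht : 0 ≤ t) :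
    Real.log (1 - p + p * Real.exp t) - t * p ≤ t ^ 2 / 8 := by
  set A : ℝ → ℝ := fun s => 1 - p + p * Real.exp s with hA
  have hApos : ∀ s, 0 < A s := by
    intro s
    rcases eq_or_lt_of_le hp0 with h | h
    · simp [hA, ← h]
    · have : 0 < p * Real.exp s := mul_pos h (Real.exp_pos s)
      have : (0:ℝ) ≤ 1 - p := by linarith
      simp only [hA]; nlinarith [Real.exp_pos s]
  -- f s = s^2/8 + s*p - log (A s); show f ≥ 0 on Ici 0
  set f : ℝ → ℝ := fun s => s ^ 2 / 8 + s * p - Real.log (A s) with hf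
  set g : ℝ → ℝ := fun s => s / 4 + p - p * Real.exp s / A s with hg
  have hA' : ∀ s, HasDerivAt A (p * Real.exp s) s := by
    intro s
    exact ((Real.hasDerivAt_exp s).const_mul p).const_add (1 - p)
  have hfd : ∀ s, HasDerivAt f (g s) s := by
    intro s
    have h1 : HasDerivAt (fun s : ℝ => s ^ 2 / 8 + s * p) (s / 4 + p) s := by
      have := ((hasDerivAt_pow 2 s).div_const 8).add ((hasDerivAt_id s).mul_const p)
      exact this.congr_deriv (by ring)
    have h2 : HasDerivAt (fun s => Real.log (A s)) (p * Real.exp s / A s) s :=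
      (hA' s).log (hApos s).ne'
    exact h1.sub h2
  have hgd : ∀ s, HasDerivAt g (1 / 4 - (p * Real.exp s / A s) * (1 - p * Real.exp s / A s)) s := by
    intro s
    have h1 : HasDerivAt (fun s : ℝ => s / 4 + p) (1 / 4) s := by
      simpa using ((hasDerivAt_id s).div_const 4).add_const p
    have h2 : HasDerivAt (fun s => p * Real.exp s / A s)
        ((p * Real.exp s * A s - p * Real.exp s * (p * Real.exp s)) / (A s) ^ 2) s :=
      ((hasDerivAt_exp s).const_mul p).div (hA' s) (hApos s).ne'
    have key : (p * Real.exp s * A s - p * Real.exp s * (p * Real.exp s)) / (A s) ^ 2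
        = (p * Real.exp s / A s) * (1 - p * Real.exp s / A s) := by
      have hB := (hApos s).ne'
      generalize A s = B at hB ⊢
      field_simp
    have := h1.sub h2
    rw [key] at this
    exact this
  have hg0 : g 0 = 0 := by simp [hg, hA]
  have hgnn : ∀ s ∈ Set.Ici (0:ℝ), 0 ≤ g s := by
    have hmono : MonotoneOn g (Set.Ici (0:ℝ)) := by
      apply monotoneOn_of_deriv_nonneg (convex_Ici 0)
      · exact (fun s _ => (hgd s).continuousAt.continuousWithinAt)
      · intro s _; exact (hgd s).differentiableAt.differentiableWithinAt
      · intro s _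
        rw [(hgd s).deriv]
        have hq0 : 0 ≤ p * Real.exp s / A s := div_nonneg (by positivity) (hApos s).le
        have hq1 : p * Real.exp s / A s ≤ 1 := by
          rw [div_le_one (hApos s)]
          simp only [hA]
          nlinarith [Real.exp_pos s]
        nlinarith [sq_nonneg (p * Real.exp s / A s - 1/2)]
    intro s hs
    calc (0:ℝ) = g 0 := hg0.symm
    _ ≤ g s := hmono (by simp) hs hs
  have hf0 : f 0 = 0 := by simp [hf, hA]
  have hfmono : MonotoneOn f (Set.Ici (0:ℝ)) := by
    apply monotoneOn_of_deriv_nonneg (convex_Ici 0)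
    · exact (fun s _ => (hfd s).continuousAt.continuousWithinAt)
    · intro s _; exact (hfd s).differentiableAt.differentiableWithinAt
    · intro s hs
      rw [(hfd s).deriv]
      exact hgnn s (le_of_lt (by simpa using hs))
  have : 0 ≤ f t := by
    calc (0:ℝ) = f 0 := hf0.symm
    _ ≤ f t := hfmono (by simp) ht ht
  simp only [hf, hA] at this
  linarith

lemma exp_convex_bound {z t : ℝ} (h0 : 0 ≤ z) (h1 : z ≤ 1) :
    Real.exp (t * z) ≤ 1 - z + z * Real.exp t := by
  have := convexOn_exp.2 (Set.mem_univ (0:ℝ)) (Set.mem_univ t) (by linarith : (0:ℝ) ≤ 1 - z) h0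
    (by ring)
  simpa [mul_comm] using this

lemma hoeffding_sum {Ω : Type*} [MeasurableSpace Ω] (μ : Measure Ω) [IsProbabilityMeasure μ]
    {n : ℕ} (Z : Fin n → Ω → ℝ) (hZm : ∀ i, Measurable (Z i))
    (hZ01 : ∀ i ω, Z i ω ∈ Set.Icc (0:ℝ) 1)
    (hind : iIndepFun Z μ) {ε : ℝ} (hε : 0 < ε) :
    (μ {ω | (∑ i, ∫ ω', Z i ω' ∂μ) + n * ε ≤ ∑ i, Z i ω}).toReal
      ≤ Real.exp (-2 * n * ε ^ 2) := by
  set t : ℝ := 4 * ε with hts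
  have ht : 0 ≤ t := by positivity
  set m : Fin n → ℝ := fun i => ∫ ω', Z i ω' ∂μ with hm
  have hZint : ∀ i, Integrable (Z i) μ := by
    intro i
    refine (integrable_const (1:ℝ)).mono' (hZm i).aestronglyMeasurable ?_
    filter_upwards with ω
    rw [Real.norm_eq_abs, abs_le]
    exact ⟨by linarith [(hZ01 i ω).1], (hZ01 i ω).2⟩
  have hm0 : ∀ i, 0 ≤ m i := fun i => integral_nonneg fun ω => (hZ01 i ω).1
  have hm1 : ∀ i, m i ≤ 1 := by
    intro i
    have := integral_mono (hZint i) (integrable_const (1:ℝ)) (fun ω => (hZ01 i ω).2)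
    simpa [hm] using this
  have hintexp : ∀ i, Integrable (fun ω => Real.exp (t * Z i ω)) μ := by
    intro i
    refine (integrable_const (Real.exp t)).mono'
      ((hZm i).const_mul t).exp.aestronglyMeasurable ?_
    filter_upwards with ω
    rw [Real.norm_eq_abs, abs_of_pos (Real.exp_pos _), Real.exp_le_exp]
    nlinarith [(hZ01 i ω).1, (hZ01 i ω).2]
  set S : Ω → ℝ := fun ω => ∑ i, Z i ω with hSd
  have hS : S = ∑ i, Z i := by ext a; simp [hSd]
  have hSm : Measurable S := Finset.measurable_sum _ fun i _ => hZm i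
  have hSle : ∀ ω, S ω ≤ n := by
    intro ω
    calc S ω = ∑ i, Z i ω := rfl
    _ ≤ ∑ _i : Fin n, (1:ℝ) := Finset.sum_le_sum fun i _ => (hZ01 i ω).2
    _ = n := by simp
  have hintexpS : Integrable (fun ω => Real.exp (t * S ω)) μ := by
    refine (integrable_const (Real.exp (t * n))).mono'
      (hSm.const_mul t).exp.aestronglyMeasurable ?_
    filter_upwards with ω
    rw [Real.norm_eq_abs, abs_of_pos (Real.exp_pos _), Real.exp_le_exp]
    exact mul_le_mul_of_nonneg_left (hSle ω) ht
  have hmgf : ∀ i, mgf (Z i) μ t ≤ Real.exp (t * m i + t ^ 2 / 8) := by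
    intro i
    have h1 : mgf (Z i) μ t ≤ 1 - m i + m i * Real.exp t := by
      rw [mgf]
      calc ∫ ω, Real.exp (t * Z i ω) ∂μ ≤ ∫ ω, (1 - Z i ω + Z i ω * Real.exp t) ∂μ := by
            refine integral_mono (hintexp i) ?_ fun ω =>
              exp_convex_bound (hZ01 i ω).1 (hZ01 i ω).2
            exact (((integrable_const 1).sub (hZint i)).add ((hZint i).mul_const _))
      _ = 1 - m i + m i * Real.exp t := by
            rw [integral_add
              (show Integrable (fun ω => 1 - Z i ω) μ from (integrable_const 1).sub (hZint i))
              (show Integrable (fun ω => Z i ω * Real.exp t) μ from (hZint i).mul_const _),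
              integral_sub (integrable_const 1) (hZint i), integral_mul_const]
            simp [hm]
    have h2 : 1 - m i + m i * Real.exp t ≤ Real.exp (t * m i + t ^ 2 / 8) := by
      have hpos : 0 < 1 - m i + m i * Real.exp t := by
        nlinarith [Real.one_le_exp ht, hm0 i, hm1 i]
      have := hoeff_scalar (hm0 i) (hm1 i) ht
      rw [← Real.exp_log hpos]
      rw [Real.exp_le_exp]
      linarith
    linarith
  have key := measure_ge_le_exp_mul_mgf (μ := μ) (X := S)
    ((∑ i, m i) + n * ε) ht hintexpS
  have hmgfS : mgf S μ t ≤ Real.exp (t * (∑ i, m i) + n * (t ^ 2 / 8)) := by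
    rw [hS, hind.mgf_sum hZm Finset.univ]
    calc ∏ i, mgf (Z i) μ t ≤ ∏ i, Real.exp (t * m i + t ^ 2 / 8) :=
        Finset.prod_le_prod (fun i _ => mgf_nonneg) (fun i _ => hmgf i)
    _ = Real.exp (∑ i, (t * m i + t ^ 2 / 8)) := (Real.exp_sum _ _).symm
    _ = Real.exp (t * (∑ i, m i) + n * (t ^ 2 / 8)) := by
        rw [Finset.sum_add_distrib, Finset.mul_sum]
        simp [mul_comm]
  calc (μ {ω | (∑ i, m i) + n * ε ≤ S ω}).toReal
      ≤ Real.exp (-t * ((∑ i, m i) + n * ε)) * mgf S μ t := key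
  _ ≤ Real.exp (-t * ((∑ i, m i) + n * ε)) * Real.exp (t * (∑ i, m i) + n * (t ^ 2 / 8)) := by
        exact mul_le_mul_of_nonneg_left hmgfS (Real.exp_pos _).le
  _ = Real.exp (-2 * n * ε ^ 2) := by
        rw [← Real.exp_add]
        congr 1
        rw [hts]
        ring

lemma grid_step_upper {n : ℕ} (hn : 0 < n) (F : ℝ → ℝ) (hmono : Monotone F)
    (hF0 : ∀ x, 0 ≤ F x) {ε : ℝ} (hε : 0 < ε) (a : Fin (n+1) → ℝ)
    (ha : ∀ k : Fin (n+1), 0 < (k : ℝ)/n - ε → F (a k) = (k : ℝ)/n - ε)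
    (w : Fin n → ℝ) (x : ℝ)
    (h : F x + ε < (1/(n:ℝ)) * ∑ i, (if w i ≤ x then (1:ℝ) else 0)) :
    ∃ k : Fin (n+1), (n:ℝ) * F (a k) + n * ε ≤ ∑ i, (if w i ≤ a k then (1:ℝ) else 0) := by
  classical
  set K := (Finset.univ.filter (fun i => w i ≤ x)).card with hKdef
  have hsum : ∑ i, (if w i ≤ x then (1:ℝ) else 0) = (K:ℝ) := by
    simp [hKdef, Finset.sum_boole]
  have hKn : K ≤ n := le_trans (Finset.card_filter_le _ _) (by simp)
  have hnpos : (0:ℝ) < n := Nat.cast_pos.2 hn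
  have hFx : F x < (K:ℝ)/n - ε := by
    rw [hsum] at h
    rw [lt_sub_iff_add_lt]
    calc F x + ε < (1/(n:ℝ)) * K := h
    _ = (K:ℝ)/n := by ring
  have hpos : 0 < (K:ℝ)/n - ε := lt_of_le_of_lt (hF0 x) hFx
  have hKlt : K < n + 1 := by omega
  refine ⟨⟨K, hKlt⟩, ?_⟩
  have hcast : ((⟨K, hKlt⟩ : Fin (n+1)) : ℝ) = (K:ℝ) := rfl
  have hFa : F (a ⟨K, hKlt⟩) = (K:ℝ)/n - ε := by
    rw [ha ⟨K, hKlt⟩ (by rw [hcast]; exact hpos), hcast]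
  have hxa : x ≤ a ⟨K, hKlt⟩ := by
    by_contra h'
    push_neg at h'
    have := hmono h'.le
    rw [hFa] at this
    linarith
  have hle : (K:ℝ) ≤ ∑ i, (if w i ≤ a ⟨K, hKlt⟩ then (1:ℝ) else 0) := by
    rw [← hsum]
    refine Finset.sum_le_sum fun i _ => ?_
    split_ifs with h1 h2 h2
    · exact le_rfl
    · exact absurd (le_trans h1 hxa) h2
    · norm_num
    · exact le_rfl
  rw [hFa]
  have : (n:ℝ) * ((K:ℝ)/n - ε) + n * ε = (K:ℝ) := by field_simp; ring
  linarith

lemma grid_step_lower {n : ℕ} (hn : 0 < n) (F : ℝ → ℝ) (hmono : Monotone F)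
    (hF1 : ∀ x, F x ≤ 1) {ε : ℝ} (hε : 0 < ε) (b : Fin (n+1) → ℝ)
    (hb : ∀ k : Fin (n+1), (k : ℝ)/n + ε < 1 → F (b k) = (k : ℝ)/n + ε)
    (w : Fin n → ℝ) (x : ℝ)
    (h : (1/(n:ℝ)) * (∑ i, (if w i ≤ x then (1:ℝ) else 0)) + ε < F x) :
    ∃ k : Fin (n+1), (∑ i, (if w i ≤ b k then (1:ℝ) else 0)) + (n:ℝ) * ε ≤ n * F (b k) := by
  classical
  set K := (Finset.univ.filter (fun i => w i ≤ x)).card with hKdef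
  have hsum : ∑ i, (if w i ≤ x then (1:ℝ) else 0) = (K:ℝ) := by
    simp [hKdef, Finset.sum_boole]
  have hKn : K ≤ n := le_trans (Finset.card_filter_le _ _) (by simp)
  have hnpos : (0:ℝ) < n := Nat.cast_pos.2 hn
  have hFx : (K:ℝ)/n + ε < F x := by
    rw [hsum] at h
    calc (K:ℝ)/n + ε = (1/(n:ℝ)) * K + ε := by ring
    _ < F x := h
  have hlt1 : (K:ℝ)/n + ε < 1 := lt_of_lt_of_le hFx (hF1 x)
  have hKlt : K < n + 1 := by omega
  refine ⟨⟨K, hKlt⟩, ?_⟩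
  have hcast : ((⟨K, hKlt⟩ : Fin (n+1)) : ℝ) = (K:ℝ) := rfl
  have hFb : F (b ⟨K, hKlt⟩) = (K:ℝ)/n + ε := by
    rw [hb ⟨K, hKlt⟩ (by rw [hcast]; exact hlt1), hcast]
  have hbx : b ⟨K, hKlt⟩ ≤ x := by
    by_contra h'
    push_neg at h'
    have := hmono h'.le
    rw [hFb] at this
    linarith
  have hle : ∑ i, (if w i ≤ b ⟨K, hKlt⟩ then (1:ℝ) else 0) ≤ (K:ℝ) := by
    rw [← hsum]
    refine Finset.sum_le_sum fun i _ => ?_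
    split_ifs with h1 h2 h2
    · exact le_rfl
    · exact absurd (le_trans h1 hbx) h2
    · norm_num
    · exact le_rfl
  rw [hFb]
  have : (n:ℝ) * ((K:ℝ)/n + ε) = (K:ℝ) + n * ε := by field_simp
  linarith

lemma exists_point {F : ℝ → ℝ} (hc : Continuous F) (hmono : Monotone F)
    (h0 : Filter.Tendsto F Filter.atBot (nhds 0))
    (h1 : Filter.Tendsto F Filter.atTop (nhds 1))
    {c : ℝ} (hc0 : 0 < c) (hc1 : c < 1) : ∃ x, F x = c := by
  obtain ⟨u, hu⟩ := (h0.eventually_lt_const hc0).exists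
  obtain ⟨v, hv⟩ := (h1.eventually_const_lt hc1).exists
  have huv : u ≤ v := by
    by_contra h'
    push_neg at h'
    have := hmono h'.le
    linarith
  have := intermediate_value_Icc huv hc.continuousOn
  obtain ⟨x, _, hx⟩ := this ⟨hu.le, hv.le⟩
  exact ⟨x, hx⟩

lemma hoeff_upper_const {Ω : Type*} [MeasurableSpace Ω] (μ : Measure Ω) [IsProbabilityMeasure μ]
    {n : ℕ} (Z : Fin n → Ω → ℝ) (hZm : ∀ i, Measurable (Z i))
    (hZ01 : ∀ i ω, Z i ω ∈ Set.Icc (0:ℝ) 1)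
    (hind : iIndepFun Z μ) (q : ℝ)
    (hq : ∀ i, ∫ ω, Z i ω ∂μ = q) {ε : ℝ} (hε : 0 < ε) :
    (μ {ω | (n:ℝ) * q + n * ε ≤ ∑ i, Z i ω}).toReal ≤ Real.exp (-2 * n * ε ^ 2) := by
  have h := hoeffding_sum μ Z hZm hZ01 hind hε
  have hs : (∑ i : Fin n, ∫ ω', Z i ω' ∂μ) = (n:ℝ) * q := by
    simp [hq, Finset.sum_const, mul_comm]
  rwa [hs] at h

lemma hoeff_lower_const {Ω : Type*} [MeasurableSpace Ω] (μ : Measure Ω) [IsProbabilityMeasure μ]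
    {n : ℕ} (Z : Fin n → Ω → ℝ) (hZm : ∀ i, Measurable (Z i))
    (hZ01 : ∀ i ω, Z i ω ∈ Set.Icc (0:ℝ) 1)
    (hind : iIndepFun Z μ) (q : ℝ)
    (hq : ∀ i, ∫ ω, Z i ω ∂μ = q) {ε : ℝ} (hε : 0 < ε) :
    (μ {ω | (∑ i, Z i ω) + (n:ℝ) * ε ≤ n * q}).toReal ≤ Real.exp (-2 * n * ε ^ 2) := by
  have hZint : ∀ i, Integrable (Z i) μ := by
    intro i
    refine (integrable_const (1:ℝ)).mono' (hZm i).aestronglyMeasurable ?_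
    filter_upwards with ω
    rw [Real.norm_eq_abs, abs_le]
    exact ⟨by linarith [(hZ01 i ω).1], (hZ01 i ω).2⟩
  have h := hoeff_upper_const μ (fun i ω => 1 - Z i ω)
    (fun i => measurable_const.sub (hZm i))
    (fun i ω => by
      have h1 := (hZ01 i ω).1
      have h2 := (hZ01 i ω).2
      constructor <;> linarith)
    (hind.comp (fun _ (x : ℝ) => 1 - x) (fun _ => measurable_const.sub measurable_id))
    (1 - q)
    (fun i => by
      rw [integral_sub (integrable_const 1) (hZint i), hq i]
      simp) hε
  have hset : {ω | (n:ℝ) * (1 - q) + n * ε ≤ ∑ i, (1 - Z i ω)}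
      = {ω | (∑ i, Z i ω) + (n:ℝ) * ε ≤ n * q} := by
    ext ω
    simp only [Set.mem_setOf_eq, Finset.sum_sub_distrib, Finset.sum_const, Finset.card_univ,
      Fintype.card_fin, nsmul_eq_mul, mul_one]
    constructor <;> intro <;> linarith
  rwa [hset] at h

lemma avg_abs_exists {n : ℕ} (hn : 0 < n) (t : Fin n → ℝ) {ε : ℝ}
    (h : ε < |(1/(n:ℝ)) * ∑ j, t j|) : ∃ j, ε < |t j| := by
  by_contra hno
  push_neg at hno
  have hnpos : (0:ℝ) < n := Nat.cast_pos.2 hn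
  have h1 : |(1/(n:ℝ)) * ∑ j, t j| ≤ (1/(n:ℝ)) * ∑ j, |t j| := by
    rw [abs_mul, abs_of_pos (by positivity : (0:ℝ) < 1/(n:ℝ))]
    exact mul_le_mul_of_nonneg_left (Finset.abs_sum_le_sum_abs _ _) (by positivity)
  have h2 : ∑ j, |t j| ≤ (n:ℝ) * ε := by
    calc ∑ j, |t j| ≤ ∑ _j : Fin n, ε := Finset.sum_le_sum fun j _ => hno j
    _ = (n:ℝ) * ε := by simp [mul_comm]
  have : (1/(n:ℝ)) * ∑ j, |t j| ≤ ε := by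
    rw [div_mul_eq_mul_div, one_mul, div_le_iff₀ hnpos]
    linarith
  linarith

lemma avg_ind_01 {n : ℕ} (hn : 0 < n) (p : Fin n → Prop) [DecidablePred p] :
    (1/(n:ℝ)) * (∑ i, if p i then (1:ℝ) else 0) ∈ Set.Icc (0:ℝ) 1 := by
  have hnpos : (0:ℝ) < n := Nat.cast_pos.2 hn
  have h0 : (0:ℝ) ≤ ∑ i, if p i then (1:ℝ) else 0 :=
    Finset.sum_nonneg fun i _ => by split_ifs <;> norm_num
  have h1 : (∑ i, if p i then (1:ℝ) else 0) ≤ (n:ℝ) := by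
    calc (∑ i, if p i then (1:ℝ) else 0) ≤ ∑ _i : Fin n, (1:ℝ) :=
      Finset.sum_le_sum fun i _ => by split_ifs <;> norm_num
    _ = (n:ℝ) := by simp
  constructor
  · positivity
  · rw [div_mul_eq_mul_div, one_mul, div_le_one hnpos]
    linarith

/-- Deviation bound for the Spearman screening statistic: for i.i.d. pairs `(X_i, Y_i)`
with continuous marginal CDFs, `ω̂ = (1/n)Σ_j F̂_X(X_j)F̂_Y(Y_j) - 1/4` and
`ω = E[F_X(X)F_Y(Y)] - 1/4` satisfy `P(|ω̂ - ω| > 3ε) ≤ 6(n+1)exp(-2nε²)`. -/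
theorem spearman_deviation_bound
    {Ω : Type*} [MeasurableSpace Ω] (μ : Measure Ω) [IsProbabilityMeasure μ]
    (n : ℕ) (hn : 0 < n)
    (V : Fin n → Ω → ℝ × ℝ) (hV : ∀ i, Measurable (V i))
    (hindep : iIndepFun V μ)
    (hident : ∀ i, μ.map (V i) = μ.map (V ⟨0, hn⟩))
    (FX FY : ℝ → ℝ)
    (hFX : ∀ x, FX x = (μ {ω | (V ⟨0, hn⟩ ω).1 ≤ x}).toReal)
    (hFY : ∀ y, FY y = (μ {ω | (V ⟨0, hn⟩ ω).2 ≤ y}).toReal)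
    (hFXc : Continuous FX) (hFYc : Continuous FY)
    (ε : ℝ) (hε : 0 < ε) :
    (μ {ω |
        3 * ε <
          |((1 / (n : ℝ)) * ∑ j,
              ((1 / (n : ℝ)) * ∑ i, if (V i ω).1 ≤ (V j ω).1 then (1 : ℝ) else 0)
                * ((1 / (n : ℝ)) * ∑ i, if (V i ω).2 ≤ (V j ω).2 then (1 : ℝ) else 0)
              - 1 / 4)
            - ((∫ ω', FX (V ⟨0, hn⟩ ω').1 * FY (V ⟨0, hn⟩ ω').2 ∂μ) - 1 / 4)|}).toReal
      ≤ 6 * ((n : ℝ) + 1) * Real.exp (-2 * (n : ℝ) * ε ^ 2) := by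
  classical
  have hnpos : (0:ℝ) < n := Nat.cast_pos.2 hn
  set i0 : Fin n := ⟨0, hn⟩ with hi0
  have hXm : ∀ i, Measurable (fun ω => (V i ω).1) := fun i => measurable_fst.comp (hV i)
  have hYm : ∀ i, Measurable (fun ω => (V i ω).2) := fun i => measurable_snd.comp (hV i)
  have hF01 : ∀ s : Set Ω, (0:ℝ) ≤ (μ s).toReal ∧ (μ s).toReal ≤ 1 := by
    intro s
    refine ⟨ENNReal.toReal_nonneg, ?_⟩
    have := ENNReal.toReal_mono (by simp) (prob_le_one (μ := μ) (s := s))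
    simpa using this
  have hFX0 : ∀ x, 0 ≤ FX x := fun x => by rw [hFX]; exact (hF01 _).1
  have hFX1 : ∀ x, FX x ≤ 1 := fun x => by rw [hFX]; exact (hF01 _).2
  have hFY0 : ∀ y, 0 ≤ FY y := fun y => by rw [hFY]; exact (hF01 _).1
  have hFY1 : ∀ y, FY y ≤ 1 := fun y => by rw [hFY]; exact (hF01 _).2
  have hFXmono : Monotone FX := by
    intro c d hcd
    rw [hFX, hFX]
    exact ENNReal.toReal_mono (measure_ne_top μ _)
      (measure_mono fun ω h => le_trans h hcd)
  have hFYmono : Monotone FY := by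
    intro c d hcd
    rw [hFY, hFY]
    exact ENNReal.toReal_mono (measure_ne_top μ _)
      (measure_mono fun ω h => le_trans h hcd)
  haveI hmapX : IsProbabilityMeasure (μ.map (fun ω => (V i0 ω).1)) :=
    Measure.isProbabilityMeasure_map (hXm i0).aemeasurable
  haveI hmapY : IsProbabilityMeasure (μ.map (fun ω => (V i0 ω).2)) :=
    Measure.isProbabilityMeasure_map (hYm i0).aemeasurable
  have hFXcdf : FX = cdf (μ.map (fun ω => (V i0 ω).1)) := by
    funext x
    rw [hFX, cdf_eq_real, Measure.real]
    congr 1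
    rw [Measure.map_apply (hXm i0) measurableSet_Iic]
    rfl
  have hFYcdf : FY = cdf (μ.map (fun ω => (V i0 ω).2)) := by
    funext y
    rw [hFY, cdf_eq_real, Measure.real]
    congr 1
    rw [Measure.map_apply (hYm i0) measurableSet_Iic]
    rfl
  have h0X : Filter.Tendsto FX Filter.atBot (nhds 0) := by
    rw [hFXcdf]; exact tendsto_cdf_atBot _
  have h1X : Filter.Tendsto FX Filter.atTop (nhds 1) := by
    rw [hFXcdf]; exact tendsto_cdf_atTop _
  have h0Y : Filter.Tendsto FY Filter.atBot (nhds 0) := by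
    rw [hFYcdf]; exact tendsto_cdf_atBot _
  have h1Y : Filter.Tendsto FY Filter.atTop (nhds 1) := by
    rw [hFYcdf]; exact tendsto_cdf_atTop _
  have hklt1 : ∀ k : Fin (n+1), (k:ℝ)/n - ε < 1 := by
    intro k
    have hk : (k:ℝ) ≤ n := by exact_mod_cast Fin.is_le k
    have : (k:ℝ)/n ≤ 1 := by rw [div_le_one hnpos]; exact hk
    linarith
  have hkpos : ∀ k : Fin (n+1), 0 < (k:ℝ)/n + ε := by
    intro k
    have : (0:ℝ) ≤ (k:ℝ)/n := by positivity
    linarith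
  -- grid points
  obtain ⟨aX, haX⟩ : ∃ a : Fin (n+1) → ℝ, ∀ k : Fin (n+1), 0 < (k:ℝ)/n - ε → FX (a k) = (k:ℝ)/n - ε := by
    have h : ∀ k : Fin (n+1), ∃ x : ℝ, 0 < (k:ℝ)/n - ε → FX x = (k:ℝ)/n - ε := by
      intro k
      by_cases hc : 0 < (k:ℝ)/n - ε
      · obtain ⟨x, hx⟩ := exists_point hFXc hFXmono h0X h1X hc (hklt1 k)
        exact ⟨x, fun _ => hx⟩
      · exact ⟨0, fun h' => absurd h' hc⟩
    exact ⟨fun k => (h k).choose, fun k => (h k).choose_spec⟩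
  obtain ⟨bX, hbX⟩ : ∃ b : Fin (n+1) → ℝ, ∀ k : Fin (n+1), (k:ℝ)/n + ε < 1 → FX (b k) = (k:ℝ)/n + ε := by
    have h : ∀ k : Fin (n+1), ∃ x : ℝ, (k:ℝ)/n + ε < 1 → FX x = (k:ℝ)/n + ε := by
      intro k
      by_cases hc : (k:ℝ)/n + ε < 1
      · obtain ⟨x, hx⟩ := exists_point hFXc hFXmono h0X h1X (hkpos k) hc
        exact ⟨x, fun _ => hx⟩
      · exact ⟨0, fun h' => absurd h' hc⟩
    exact ⟨fun k => (h k).choose, fun k => (h k).choose_spec⟩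
  obtain ⟨aY, haY⟩ : ∃ a : Fin (n+1) → ℝ, ∀ k : Fin (n+1), 0 < (k:ℝ)/n - ε → FY (a k) = (k:ℝ)/n - ε := by
    have h : ∀ k : Fin (n+1), ∃ x : ℝ, 0 < (k:ℝ)/n - ε → FY x = (k:ℝ)/n - ε := by
      intro k
      by_cases hc : 0 < (k:ℝ)/n - ε
      · obtain ⟨x, hx⟩ := exists_point hFYc hFYmono h0Y h1Y hc (hklt1 k)
        exact ⟨x, fun _ => hx⟩
      · exact ⟨0, fun h' => absurd h' hc⟩
    exact ⟨fun k => (h k).choose, fun k => (h k).choose_spec⟩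
  obtain ⟨bY, hbY⟩ : ∃ b : Fin (n+1) → ℝ, ∀ k : Fin (n+1), (k:ℝ)/n + ε < 1 → FY (b k) = (k:ℝ)/n + ε := by
    have h : ∀ k : Fin (n+1), ∃ x : ℝ, (k:ℝ)/n + ε < 1 → FY x = (k:ℝ)/n + ε := by
      intro k
      by_cases hc : (k:ℝ)/n + ε < 1
      · obtain ⟨x, hx⟩ := exists_point hFYc hFYmono h0Y h1Y (hkpos k) hc
        exact ⟨x, fun _ => hx⟩
      · exact ⟨0, fun h' => absurd h' hc⟩
    exact ⟨fun k => (h k).choose, fun k => (h k).choose_spec⟩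
  -- integral identities
  have hqX : ∀ (c : ℝ) (i : Fin n),
      ∫ ω, (if (V i ω).1 ≤ c then (1:ℝ) else 0) ∂μ = FX c := by
    intro c i
    have hgm : Measurable (fun p : ℝ × ℝ => if p.1 ≤ c then (1:ℝ) else 0) :=
      Measurable.ite (measurableSet_le measurable_fst measurable_const)
        measurable_const measurable_const
    have h1 : ∫ ω, (if (V i ω).1 ≤ c then (1:ℝ) else 0) ∂μ
        = ∫ p, (if p.1 ≤ c then (1:ℝ) else 0) ∂(μ.map (V i)) :=
      (integral_map (hV i).aemeasurable hgm.aestronglyMeasurable).symm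
    rw [h1, hident i, integral_map (hV i0).aemeasurable hgm.aestronglyMeasurable]
    have hs : MeasurableSet {ω | (V i0 ω).1 ≤ c} :=
      measurableSet_le (hXm i0) measurable_const
    have heq : (fun ω => if (V i0 ω).1 ≤ c then (1:ℝ) else 0)
        = Set.indicator {ω | (V i0 ω).1 ≤ c} (fun _ => (1:ℝ)) := by
      funext ω
      by_cases h : (V i0 ω).1 ≤ c <;> simp [Set.indicator_apply, h]
    rw [heq, integral_indicator_const (1:ℝ) hs, smul_eq_mul, mul_one, hFX]
    rfl
  have hqY : ∀ (c : ℝ) (i : Fin n),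
      ∫ ω, (if (V i ω).2 ≤ c then (1:ℝ) else 0) ∂μ = FY c := by
    intro c i
    have hgm : Measurable (fun p : ℝ × ℝ => if p.2 ≤ c then (1:ℝ) else 0) :=
      Measurable.ite (measurableSet_le measurable_snd measurable_const)
        measurable_const measurable_const
    have h1 : ∫ ω, (if (V i ω).2 ≤ c then (1:ℝ) else 0) ∂μ
        = ∫ p, (if p.2 ≤ c then (1:ℝ) else 0) ∂(μ.map (V i)) :=
      (integral_map (hV i).aemeasurable hgm.aestronglyMeasurable).symm
    rw [h1, hident i, integral_map (hV i0).aemeasurable hgm.aestronglyMeasurable]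
    have hs : MeasurableSet {ω | (V i0 ω).2 ≤ c} :=
      measurableSet_le (hYm i0) measurable_const
    have heq : (fun ω => if (V i0 ω).2 ≤ c then (1:ℝ) else 0)
        = Set.indicator {ω | (V i0 ω).2 ≤ c} (fun _ => (1:ℝ)) := by
      funext ω
      by_cases h : (V i0 ω).2 ≤ c <;> simp [Set.indicator_apply, h]
    rw [heq, integral_indicator_const (1:ℝ) hs, smul_eq_mul, mul_one, hFY]
    rfl
  set I : ℝ := ∫ ω', FX (V i0 ω').1 * FY (V i0 ω').2 ∂μ with hIdef
  have hgmZ : Measurable (fun p : ℝ × ℝ => FX p.1 * FY p.2) :=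
    ((hFXc.comp continuous_fst).mul (hFYc.comp continuous_snd)).measurable
  have hqZ : ∀ j, ∫ ω, FX (V j ω).1 * FY (V j ω).2 ∂μ = I := by
    intro j
    calc ∫ ω, FX (V j ω).1 * FY (V j ω).2 ∂μ
        = ∫ p, FX p.1 * FY p.2 ∂(μ.map (V j)) :=
          (integral_map (hV j).aemeasurable hgmZ.aestronglyMeasurable).symm
    _ = ∫ p, FX p.1 * FY p.2 ∂(μ.map (V i0)) := by rw [hident j]
    _ = I := integral_map (hV i0).aemeasurable hgmZ.aestronglyMeasurable
  -- events
  set e : ℝ := Real.exp (-2 * n * ε^2) with hedef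
  have hepos : 0 < e := Real.exp_pos _
  set EXu : Fin (n+1) → Set Ω := fun k =>
    {ω | (n:ℝ) * FX (aX k) + n * ε ≤ ∑ i, if (V i ω).1 ≤ aX k then (1:ℝ) else 0} with hEXu
  set EXl : Fin (n+1) → Set Ω := fun k =>
    {ω | (∑ i, if (V i ω).1 ≤ bX k then (1:ℝ) else 0) + (n:ℝ) * ε ≤ n * FX (bX k)} with hEXl
  set EYu : Fin (n+1) → Set Ω := fun k =>
    {ω | (n:ℝ) * FY (aY k) + n * ε ≤ ∑ i, if (V i ω).2 ≤ aY k then (1:ℝ) else 0} with hEYu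
  set EYl : Fin (n+1) → Set Ω := fun k =>
    {ω | (∑ i, if (V i ω).2 ≤ bY k then (1:ℝ) else 0) + (n:ℝ) * ε ≤ n * FY (bY k)} with hEYl
  set ECu : Set Ω := {ω | (n:ℝ) * I + n * ε ≤ ∑ j, FX (V j ω).1 * FY (V j ω).2} with hECu
  set ECl : Set Ω := {ω | (∑ j, FX (V j ω).1 * FY (V j ω).2) + (n:ℝ) * ε ≤ n * I} with hECl
  have hbound : ∀ s : Set Ω, (μ s).toReal ≤ e → μ s ≤ ENNReal.ofReal e := by
    intro s h
    rw [← ENNReal.ofReal_toReal (measure_ne_top μ s)]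
    exact ENNReal.ofReal_le_ofReal h
  have hiteIcc : ∀ (P : Prop) [Decidable P], (if P then (1:ℝ) else 0) ∈ Set.Icc (0:ℝ) 1 := by
    intro P _
    split_ifs <;> constructor <;> norm_num
  have hEXu_bd : ∀ k, μ (EXu k) ≤ ENNReal.ofReal e := by
    intro k
    refine hbound _ ?_
    exact hoeff_upper_const μ (fun i ω => if (V i ω).1 ≤ aX k then (1:ℝ) else 0)
      (fun i => Measurable.ite (measurableSet_le (hXm i) measurable_const)
        measurable_const measurable_const)
      (fun i ω => hiteIcc _)
      (hindep.comp (fun _ p => if p.1 ≤ aX k then (1:ℝ) else 0)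
        (fun _ => Measurable.ite (measurableSet_le measurable_fst measurable_const)
          measurable_const measurable_const))
      (FX (aX k)) (fun i => hqX (aX k) i) hε
  have hEXl_bd : ∀ k, μ (EXl k) ≤ ENNReal.ofReal e := by
    intro k
    refine hbound _ ?_
    exact hoeff_lower_const μ (fun i ω => if (V i ω).1 ≤ bX k then (1:ℝ) else 0)
      (fun i => Measurable.ite (measurableSet_le (hXm i) measurable_const)
        measurable_const measurable_const)
      (fun i ω => hiteIcc _)
      (hindep.comp (fun _ p => if p.1 ≤ bX k then (1:ℝ) else 0)
        (fun _ => Measurable.ite (measurableSet_le measurable_fst measurable_const)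
          measurable_const measurable_const))
      (FX (bX k)) (fun i => hqX (bX k) i) hε
  have hEYu_bd : ∀ k, μ (EYu k) ≤ ENNReal.ofReal e := by
    intro k
    refine hbound _ ?_
    exact hoeff_upper_const μ (fun i ω => if (V i ω).2 ≤ aY k then (1:ℝ) else 0)
      (fun i => Measurable.ite (measurableSet_le (hYm i) measurable_const)
        measurable_const measurable_const)
      (fun i ω => hiteIcc _)
      (hindep.comp (fun _ p => if p.2 ≤ aY k then (1:ℝ) else 0)
        (fun _ => Measurable.ite (measurableSet_le measurable_snd measurable_const)
          measurable_const measurable_const))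
      (FY (aY k)) (fun i => hqY (aY k) i) hε
  have hEYl_bd : ∀ k, μ (EYl k) ≤ ENNReal.ofReal e := by
    intro k
    refine hbound _ ?_
    exact hoeff_lower_const μ (fun i ω => if (V i ω).2 ≤ bY k then (1:ℝ) else 0)
      (fun i => Measurable.ite (measurableSet_le (hYm i) measurable_const)
        measurable_const measurable_const)
      (fun i ω => hiteIcc _)
      (hindep.comp (fun _ p => if p.2 ≤ bY k then (1:ℝ) else 0)
        (fun _ => Measurable.ite (measurableSet_le measurable_snd measurable_const)
          measurable_const measurable_const))
      (FY (bY k)) (fun i => hqY (bY k) i) hε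
  have hZIcc : ∀ (j : Fin n) (ω : Ω), FX (V j ω).1 * FY (V j ω).2 ∈ Set.Icc (0:ℝ) 1 := by
    intro j ω
    constructor
    · exact mul_nonneg (hFX0 _) (hFY0 _)
    · nlinarith [hFX0 (V j ω).1, hFX1 (V j ω).1, hFY0 (V j ω).2, hFY1 (V j ω).2]
  have hECu_bd : μ ECu ≤ ENNReal.ofReal e := by
    refine hbound _ ?_
    exact hoeff_upper_const μ (fun j ω => FX (V j ω).1 * FY (V j ω).2)
      (fun j => hgmZ.comp (hV j)) hZIcc
      (hindep.comp (fun _ p => FX p.1 * FY p.2) (fun _ => hgmZ))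
      I hqZ hε
  have hECl_bd : μ ECl ≤ ENNReal.ofReal e := by
    refine hbound _ ?_
    exact hoeff_lower_const μ (fun j ω => FX (V j ω).1 * FY (V j ω).2)
      (fun j => hgmZ.comp (hV j)) hZIcc
      (hindep.comp (fun _ p => FX p.1 * FY p.2) (fun _ => hgmZ))
      I hqZ hε
  -- the union
  set U : Set Ω := ECu ∪ ECl ∪ ⋃ k, (EXu k ∪ EXl k ∪ EYu k ∪ EYl k) with hU
  -- inclusion
  have hincl : {ω |
        3 * ε <
          |((1 / (n : ℝ)) * ∑ j,
              ((1 / (n : ℝ)) * ∑ i, if (V i ω).1 ≤ (V j ω).1 then (1 : ℝ) else 0)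
                * ((1 / (n : ℝ)) * ∑ i, if (V i ω).2 ≤ (V j ω).2 then (1 : ℝ) else 0)
              - 1 / 4)
            - (I - 1 / 4)|} ⊆ U := by
    intro ω hω
    simp only [Set.mem_setOf_eq] at hω
    set SA : ℝ := (1/(n:ℝ)) * ∑ j,
      (((1/(n:ℝ)) * ∑ i, if (V i ω).1 ≤ (V j ω).1 then (1:ℝ) else 0) - FX (V j ω).1)
        * ((1/(n:ℝ)) * ∑ i, if (V i ω).2 ≤ (V j ω).2 then (1:ℝ) else 0) with hSA
    set SB : ℝ := (1/(n:ℝ)) * ∑ j,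
      FX (V j ω).1 * (((1/(n:ℝ)) * ∑ i, if (V i ω).2 ≤ (V j ω).2 then (1:ℝ) else 0)
        - FY (V j ω).2) with hSB
    set SC : ℝ := (1/(n:ℝ)) * ∑ j, FX (V j ω).1 * FY (V j ω).2 with hSC
    have hrw : ((1 / (n : ℝ)) * ∑ j,
          ((1 / (n : ℝ)) * ∑ i, if (V i ω).1 ≤ (V j ω).1 then (1 : ℝ) else 0)
            * ((1 / (n : ℝ)) * ∑ i, if (V i ω).2 ≤ (V j ω).2 then (1 : ℝ) else 0)
          - 1 / 4) - (I - 1 / 4) = SA + SB + (SC - I) := by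
      rw [hSA, hSB, hSC]
      rw [show (∑ j,
          ((1 / (n : ℝ)) * ∑ i, if (V i ω).1 ≤ (V j ω).1 then (1 : ℝ) else 0)
            * ((1 / (n : ℝ)) * ∑ i, if (V i ω).2 ≤ (V j ω).2 then (1 : ℝ) else 0))
        = ∑ j, ((((1/(n:ℝ)) * ∑ i, if (V i ω).1 ≤ (V j ω).1 then (1:ℝ) else 0)
              - FX (V j ω).1)
            * ((1/(n:ℝ)) * ∑ i, if (V i ω).2 ≤ (V j ω).2 then (1:ℝ) else 0)
          + FX (V j ω).1 * (((1/(n:ℝ)) * ∑ i, if (V i ω).2 ≤ (V j ω).2 then (1:ℝ) else 0)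
              - FY (V j ω).2)
          + FX (V j ω).1 * FY (V j ω).2)
        from Finset.sum_congr rfl fun j _ => by ring]
      rw [Finset.sum_add_distrib, Finset.sum_add_distrib]
      ring
    rw [hrw] at hω
    have htri : ε < |SA| ∨ ε < |SB| ∨ ε < |SC - I| := by
      by_contra hc
      push_neg at hc
      obtain ⟨h1, h2, h3⟩ := hc
      have t1 := abs_add_le (SA + SB) (SC - I)
      have t2 := abs_add_le SA SB
      linarith
    rcases htri with hA | hB | hC
    · -- A term
      rw [hSA] at hA
      obtain ⟨j, hj⟩ := avg_abs_exists hn _ hA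
      have h01Y := avg_ind_01 hn (fun i => (V i ω).2 ≤ (V j ω).2)
      have hd : ε < |((1/(n:ℝ)) * ∑ i, if (V i ω).1 ≤ (V j ω).1 then (1:ℝ) else 0)
          - FX (V j ω).1| := by
        refine lt_of_lt_of_le hj ?_
        rw [abs_mul]
        refine mul_le_of_le_one_right (abs_nonneg _) ?_
        rw [abs_of_nonneg h01Y.1]
        exact h01Y.2
      rcases lt_abs.1 hd with hdd | hdd
      · obtain ⟨k, hk⟩ := grid_step_upper hn FX hFXmono hFX0 hε aX haX
          (fun i => (V i ω).1) ((V j ω).1) (by linarith)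
        exact Set.mem_union_right _ (Set.mem_iUnion.2
          ⟨k, Or.inl (Or.inl (Or.inl hk))⟩)
      · obtain ⟨k, hk⟩ := grid_step_lower hn FX hFXmono hFX1 hε bX hbX
          (fun i => (V i ω).1) ((V j ω).1) (by linarith)
        exact Set.mem_union_right _ (Set.mem_iUnion.2
          ⟨k, Or.inl (Or.inl (Or.inr hk))⟩)
    · -- B term
      rw [hSB] at hB
      obtain ⟨j, hj⟩ := avg_abs_exists hn _ hB
      have hd : ε < |((1/(n:ℝ)) * ∑ i, if (V i ω).2 ≤ (V j ω).2 then (1:ℝ) else 0)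
          - FY (V j ω).2| := by
        refine lt_of_lt_of_le hj ?_
        rw [abs_mul]
        refine mul_le_of_le_one_left (abs_nonneg _) ?_
        rw [abs_of_nonneg (hFX0 _)]
        exact hFX1 _
      rcases lt_abs.1 hd with hdd | hdd
      · obtain ⟨k, hk⟩ := grid_step_upper hn FY hFYmono hFY0 hε aY haY
          (fun i => (V i ω).2) ((V j ω).2) (by linarith)
        exact Set.mem_union_right _ (Set.mem_iUnion.2
          ⟨k, Or.inl (Or.inr hk)⟩)
      · obtain ⟨k, hk⟩ := grid_step_lower hn FY hFYmono hFY1 hε bY hbY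
          (fun i => (V i ω).2) ((V j ω).2) (by linarith)
        exact Set.mem_union_right _ (Set.mem_iUnion.2
          ⟨k, Or.inr hk⟩)
    · -- C term
      rw [hSC] at hC
      have hmul : (n:ℝ) * ((1/(n:ℝ)) * ∑ j, FX (V j ω).1 * FY (V j ω).2)
          = ∑ j, FX (V j ω).1 * FY (V j ω).2 := by
        field_simp
      rcases lt_abs.1 hC with hdd | hdd
      · refine Set.mem_union_left _ (Set.mem_union_left _ ?_)
        show (n:ℝ) * I + n * ε ≤ ∑ j, FX (V j ω).1 * FY (V j ω).2
        nlinarith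
      · refine Set.mem_union_left _ (Set.mem_union_right _ ?_)
        show (∑ j, FX (V j ω).1 * FY (V j ω).2) + (n:ℝ) * ε ≤ n * I
        nlinarith
  -- union bound
  have hGk : ∀ k, μ (EXu k ∪ EXl k ∪ EYu k ∪ EYl k) ≤ 4 * ENNReal.ofReal e := by
    intro k
    calc μ (EXu k ∪ EXl k ∪ EYu k ∪ EYl k)
        ≤ μ (EXu k ∪ EXl k ∪ EYu k) + μ (EYl k) := measure_union_le _ _
    _ ≤ (μ (EXu k ∪ EXl k) + μ (EYu k)) + μ (EYl k) :=
        add_le_add_left (measure_union_le _ _) _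
    _ ≤ ((μ (EXu k) + μ (EXl k)) + μ (EYu k)) + μ (EYl k) :=
        add_le_add_left (add_le_add_left (measure_union_le _ _) _) _
    _ ≤ ((ENNReal.ofReal e + ENNReal.ofReal e) + ENNReal.ofReal e) + ENNReal.ofReal e :=
        add_le_add (add_le_add (add_le_add (hEXu_bd k) (hEXl_bd k)) (hEYu_bd k)) (hEYl_bd k)
    _ = 4 * ENNReal.ofReal e := by ring
  have hUbd : μ U ≤ (4 * (n + 1) + 2 : ℕ) * ENNReal.ofReal e := by
    calc μ U ≤ μ (ECu ∪ ECl) + μ (⋃ k, (EXu k ∪ EXl k ∪ EYu k ∪ EYl k)) :=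
        measure_union_le _ _
    _ ≤ (μ ECu + μ ECl) + ∑' k, μ (EXu k ∪ EXl k ∪ EYu k ∪ EYl k) :=
        add_le_add (measure_union_le _ _) (measure_iUnion_le _)
    _ = (μ ECu + μ ECl) + ∑ k, μ (EXu k ∪ EXl k ∪ EYu k ∪ EYl k) := by
        rw [tsum_fintype]
    _ ≤ (ENNReal.ofReal e + ENNReal.ofReal e) + ∑ _k : Fin (n+1), 4 * ENNReal.ofReal e :=
        add_le_add (add_le_add hECu_bd hECl_bd) (Finset.sum_le_sum fun k _ => hGk k)
    _ = (4 * (n + 1) + 2 : ℕ) * ENNReal.ofReal e := by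
        rw [Finset.sum_const, Finset.card_univ, Fintype.card_fin]
        push_cast
        ring
  have hfin : μ {ω |
        3 * ε <
          |((1 / (n : ℝ)) * ∑ j,
              ((1 / (n : ℝ)) * ∑ i, if (V i ω).1 ≤ (V j ω).1 then (1 : ℝ) else 0)
                * ((1 / (n : ℝ)) * ∑ i, if (V i ω).2 ≤ (V j ω).2 then (1 : ℝ) else 0)
              - 1 / 4)
            - (I - 1 / 4)|} ≤ (4 * (n + 1) + 2 : ℕ) * ENNReal.ofReal e :=
    le_trans (measure_mono hincl) hUbd
  have hnet : ((4 * (n + 1) + 2 : ℕ) : ℝ≥0∞) * ENNReal.ofReal e ≠ ⊤ :=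
    ENNReal.mul_ne_top (ENNReal.natCast_ne_top _) ENNReal.ofReal_ne_top
  calc (μ {ω |
        3 * ε <
          |((1 / (n : ℝ)) * ∑ j,
              ((1 / (n : ℝ)) * ∑ i, if (V i ω).1 ≤ (V j ω).1 then (1 : ℝ) else 0)
                * ((1 / (n : ℝ)) * ∑ i, if (V i ω).2 ≤ (V j ω).2 then (1 : ℝ) else 0)
              - 1 / 4)
            - (I - 1 / 4)|}).toReal
      ≤ (((4 * (n + 1) + 2 : ℕ) : ℝ≥0∞) * ENNReal.ofReal e).toReal :=
        ENNReal.toReal_mono hnet hfin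
  _ = (4 * (n + 1) + 2 : ℕ) * e := by
      rw [ENNReal.toReal_mul, ENNReal.toReal_ofReal hepos.le, ENNReal.toReal_natCast]
  _ ≤ 6 * ((n : ℝ) + 1) * e := by
      push_cast
      nlinarith [hepos, hnpos]
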